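/- For y ∈ Z_p, the sequence of binomial coefficients mod p, n ↦ C(y,n) ∈ F_p, is ultimately periodic if and only if y ∈ Z. -/

import Mathlib

open Nat

section Lucas
variable {p : ℕ} [Fact p.Prime]

lemma lucas_step (A B : ℕ) :
    (A.choose B : ZMod p) = (A % p).choose (B % p) * (A / p).choose (B / p) := by
  have h := Choose.choose_modEq_choose_mod_mul_choose_div_nat (p := p) (n := A) (k := B)
  exact_mod_cast (ZMod.natCast_eq_natCast_iff _ _ _).mpr h

lemma lucas_pow (j : ℕ) (A B : ℕ) :
    (A.choose B : ZMod p) =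
      (A / p ^ j).choose (B / p ^ j) * ((A % p ^ j).choose (B % p ^ j) : ZMod p) := by
  induction j generalizing A B with
  | zero => simp [Nat.mod_one]
  | succ j ih =>
    have hp1 : p ^ (j+1) = p * p ^ j := by rw [pow_succ]; ring
    have hmm : ∀ x : ℕ, x % p ^ (j+1) % p = x % p := fun x =>
      Nat.mod_mod_of_dvd x ⟨p ^ j, hp1⟩
    have hmd : ∀ x : ℕ, x % p ^ (j+1) / p = x / p % p ^ j := fun x => by
      rw [hp1]; exact Nat.mod_mul_right_div_self x p (p ^ j)
    have hdd : ∀ x : ℕ, x / p / p ^ j = x / p ^ (j+1) := fun x => by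
      rw [Nat.div_div_eq_div_mul, hp1]
    rw [lucas_step A B, ih (A / p) (B / p),
      lucas_step (A % p ^ (j+1)) (B % p ^ (j+1)), hmm, hmm, hmd, hmd, hdd, hdd]
    ring

lemma lucas_mod (k A B : ℕ) (hB : B < p ^ k) :
    (A.choose B : ZMod p) = ((A % p ^ k).choose B : ZMod p) := by
  rw [lucas_pow k A B, Nat.div_eq_of_lt hB, Nat.mod_eq_of_lt hB, Nat.choose_zero_right]
  simp

lemma choose_congr {a b n k : ℕ} (h : a ≡ b [MOD p ^ k]) (hn : n < p ^ k) :
    (a.choose n : ZMod p) = (b.choose n : ZMod p) := by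
  rw [lucas_mod k a n hn, lucas_mod k b n hn, show a % p ^ k = b % p ^ k from h]

lemma neg_choose (K : ℕ) : ∀ n t : ℕ, t + 1 + n < p ^ K →
    (((p ^ K - (t + 1)).choose n : ℕ) : ZMod p) = (-1) ^ n * ((t + n).choose n : ℕ) := by
  intro n
  induction n with
  | zero => intro t h; simp
  | succ n ihn =>
    have key : ∀ t : ℕ, t + 1 + (n+1) < p ^ K →
        ((p ^ K - (t+1)).choose (n+1) : ZMod p)
          = ((p ^ K - t).choose (n+1) : ZMod p) - ((p ^ K - (t+1)).choose n : ZMod p) := by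
      intro t h
      have h1 : p ^ K - t = (p ^ K - (t+1)) + 1 := by omega
      have h2 : (p ^ K - t).choose (n+1)
          = (p ^ K - (t+1)).choose n + (p ^ K - (t+1)).choose (n+1) := by
        rw [h1]; exact Nat.choose_succ_succ _ n
      have := congrArg (fun x : ℕ => (x : ZMod p)) h2
      push_cast at this
      rw [this]; ring
    intro t
    induction t with
    | zero =>
      intro h
      have h0 : ((p ^ K).choose (n+1) : ZMod p) = 0 :=
        (ZMod.natCast_eq_zero_iff _ _).mpr
          (Nat.Prime.dvd_choose_pow Fact.out (by omega) (by omega))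
      rw [key 0 h, ihn 0 (by omega)]
      simp only [Nat.sub_zero, Nat.zero_add, Nat.choose_self, Nat.cast_one, h0]
      ring
    | succ s ihs =>
      intro h
      rw [key (s+1) h, show s + 1 + 1 = s + 2 from rfl]
      have e1 := ihs (by omega)
      have e2 := ihn (s+1) (by omega)
      rw [e1, e2]
      have h2 : (s + 1 + (n+1)).choose (n+1) = (s + (n+1)).choose n + (s + (n+1)).choose (n+1) := by
        rw [show s + 1 + (n+1) = (s + (n+1)) + 1 by ring]
        exact Nat.choose_succ_succ _ n
      have := congrArg (fun x : ℕ => (x : ZMod p)) h2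
      push_cast at this
      rw [show s + 1 + n = s + (n+1) by ring]
      rw [this]
      ring
end Lucas

section Appr
variable {p : ℕ} [Fact p.Prime]

lemma appr_modEq (y : ℤ_[p]) {k N : ℕ} (h : k ≤ N) : y.appr N ≡ y.appr k [MOD p ^ k] :=
  ((Nat.modEq_iff_dvd' (y.appr_mono h)).mpr (PadicInt.dvd_appr_sub_appr y k N h)).symm

lemma appr_mod_pow (y : ℤ_[p]) {k N : ℕ} (h : k ≤ N) : y.appr N % p ^ k = y.appr k := by
  have := appr_modEq y h
  rwa [Nat.ModEq, Nat.mod_eq_of_lt (y.appr_lt k)] at this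

noncomputable def pdigit (y : ℤ_[p]) (m : ℕ) : ℕ := (y.appr (m+1) - y.appr m) / p ^ m

lemma pdigit_spec (y : ℤ_[p]) (m : ℕ) :
    y.appr (m+1) = y.appr m + p ^ m * pdigit y m ∧ pdigit y m < p := by
  have hp : 0 < p := (Fact.out : p.Prime).pos
  obtain ⟨c, hc⟩ := PadicInt.dvd_appr_sub_appr y m (m+1) (Nat.le_succ m)
  have hmono : y.appr m ≤ y.appr (m+1) := y.appr_mono (Nat.le_succ m)
  have hd : pdigit y m = c := by
    rw [pdigit, hc, Nat.mul_div_cancel_left _ (Nat.pow_pos (n := m) hp)]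
  have h1 : y.appr (m+1) = y.appr m + p ^ m * c := by omega
  have hlt2 : y.appr (m+1) < p ^ (m+1) := y.appr_lt (m+1)
  rw [pow_succ] at hlt2
  have hpm : 0 < p ^ m := Nat.pow_pos (n := m) hp
  constructor
  · rw [hd]; exact h1
  · rw [hd]
    by_contra hcp
    push_neg at hcp
    have : p ^ m * p ≤ p ^ m * c := Nat.mul_le_mul_left _ hcp
    omega

lemma padic_eq_of_forall_mem_span {y z : ℤ_[p]}
    (h : ∀ m : ℕ, y - z ∈ Ideal.span {(p : ℤ_[p]) ^ m}) : y = z := by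
  rw [← sub_eq_zero]
  by_contra hne
  have hpos : 0 < ‖y - z‖ := norm_pos_iff.mpr hne
  obtain ⟨m, hm⟩ := PadicInt.exists_pow_neg_lt p hpos
  have := (PadicInt.norm_le_pow_iff_mem_span_pow (y - z) m).mpr (h m)
  linarith

lemma eventually_digit_zero (y : ℤ_[p]) (M : ℕ) (h : ∀ m, M ≤ m → pdigit y m = 0) :
    ∃ z : ℤ, y = (z : ℤ_[p]) := by
  have hconst : ∀ m, M ≤ m → y.appr m = y.appr M := by
    intro m hm
    induction m, hm using Nat.le_induction with
    | base => rfl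
    | succ m hm ih =>
      have := (pdigit_spec y m).1
      rw [h m hm] at this
      omega
  refine ⟨(y.appr M : ℤ), ?_⟩
  have : ((y.appr M : ℤ) : ℤ_[p]) = ((y.appr M : ℕ) : ℤ_[p]) := by push_cast; ring
  rw [this]
  apply padic_eq_of_forall_mem_span
  intro m
  have hMm : y - y.appr (max m M) ∈ Ideal.span {(p : ℤ_[p]) ^ (max m M)} :=
    PadicInt.appr_spec (max m M) y
  rw [hconst (max m M) (le_max_right m M)] at hMm
  rw [Ideal.mem_span_singleton] at hMm ⊢
  exact dvd_trans (pow_dvd_pow _ (le_max_left m M)) hMm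

lemma eventually_digit_top (y : ℤ_[p]) (M : ℕ) (h : ∀ m, M ≤ m → pdigit y m = p - 1) :
    ∃ z : ℤ, y = (z : ℤ_[p]) := by
  have hp : 0 < p := (Fact.out : p.Prime).pos
  have hconst : ∀ m, M ≤ m → y.appr m + p ^ M = y.appr M + p ^ m := by
    intro m hm
    induction m, hm using Nat.le_induction with
    | base => rfl
    | succ m hm ih =>
      have h1 := (pdigit_spec y m).1
      rw [h m hm] at h1
      have h2 : p ^ (m+1) = p ^ m * p := pow_succ p m
      have h3 : p ^ m * (p - 1) + p ^ m = p ^ m * p := by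
        have h4 : p ^ m * (p - 1) = p ^ m * p - p ^ m * 1 := Nat.mul_sub _ _ _
        have h5 : p ^ m * 1 ≤ p ^ m * p := Nat.mul_le_mul_left _ hp
        omega
      omega
  refine ⟨(y.appr M : ℤ) - p ^ M, ?_⟩
  apply padic_eq_of_forall_mem_span
  intro m
  set m' := max m M with hm'
  have hMm : y - y.appr m' ∈ Ideal.span {(p : ℤ_[p]) ^ m'} := PadicInt.appr_spec m' y
  rw [Ideal.mem_span_singleton] at hMm ⊢
  have hc := hconst m' (le_max_right m M)
  have hcast : (y.appr m' : ℤ_[p]) + (p : ℤ_[p]) ^ M = (y.appr M : ℤ_[p]) + (p : ℤ_[p]) ^ m' := by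
    exact_mod_cast congrArg (fun t : ℕ => (t : ℤ_[p])) hc
  have key : y - (((y.appr M : ℤ) - p ^ M : ℤ) : ℤ_[p])
      = (y - y.appr m') + (p : ℤ_[p]) ^ m' := by
    push_cast
    linear_combination hcast
  rw [key]
  exact dvd_add (dvd_trans (pow_dvd_pow _ (le_max_left m M)) hMm)
    (dvd_trans (pow_dvd_pow _ (le_max_left m M)) (dvd_refl _))
end Appr

/-- The `p`-adic binomial coefficient `C(y, n)` reduced mod `p`: since `C(·, n)` is `p`-adically
continuous and `n < p^(n+1)`, it equals `C(y', n) mod p` for any integer `y' ≡ y mod p^(n+1)`,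
e.g. the canonical approximation `y.appr (n+1)`. -/
noncomputable def padicChoose {p : ℕ} [Fact p.Prime] (y : ℤ_[p]) (n : ℕ) : ZMod p :=
  ((y.appr (n + 1)).choose n : ZMod p)

section Main
variable {p : ℕ} [Fact p.Prime]

lemma appr_modEq_of_span (y : ℤ_[p]) (b N : ℕ)
    (hb : y - (b : ℤ_[p]) ∈ Ideal.span {(p : ℤ_[p]) ^ N}) : y.appr N ≡ b [MOD p ^ N] := by
  have h := PadicInt.zmod_congr_of_sub_mem_span N y (y.appr N) b (PadicInt.appr_spec N y) hb
  exact (ZMod.natCast_eq_natCast_iff _ _ _).mp h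

lemma lt_pow_succ_self (n : ℕ) : n < p ^ (n + 1) :=
  lt_of_lt_of_le (Nat.lt_pow_self (n := n) (Fact.out : p.Prime).one_lt)
    (Nat.pow_le_pow_right (Fact.out : p.Prime).one_lt.le (Nat.le_succ n))

lemma padicChoose_eval (y : ℤ_[p]) {k m : ℕ} (hk : k ≤ m) (b : ℕ) (hb : b < p ^ k) :
    padicChoose y (p ^ m + b) = (pdigit y m : ZMod p) * ((y.appr k).choose b : ZMod p) := by
  have hp1 : 1 < p := (Fact.out : p.Prime).one_lt
  have hpm : 0 < p ^ m := Nat.pow_pos (n := m) (by omega)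
  have hbm : b < p ^ m := lt_of_lt_of_le hb (Nat.pow_le_pow_right (by omega) hk)
  set N := p ^ m + b + 1 with hN
  have hmN : m + 1 ≤ N := by
    have : m < p ^ m := Nat.lt_pow_self (n := m) hp1
    omega
  have hdiv : (p ^ m + b) / p ^ m = 1 := by
    rw [Nat.add_comm, Nat.add_div_right _ hpm, Nat.div_eq_of_lt hbm]
  have hmod : (p ^ m + b) % p ^ m = b := by
    rw [Nat.add_comm, Nat.add_mod_right, Nat.mod_eq_of_lt hbm]
  have hD : y.appr N / p ^ m % p = pdigit y m := by
    have h1 : y.appr N % (p ^ m * p) / p ^ m = y.appr N / p ^ m % p :=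
      Nat.mod_mul_right_div_self _ _ _
    rw [← pow_succ] at h1
    rw [← h1, appr_mod_pow y hmN, (pdigit_spec y m).1,
      Nat.add_mul_div_left _ _ hpm, Nat.div_eq_of_lt (y.appr_lt m), Nat.zero_add]
  have hmN' : m ≤ N := by omega
  have hfst : ((y.appr N / p ^ m : ℕ) : ZMod p) = (pdigit y m : ZMod p) := by
    rw [← hD]; exact (ZMod.natCast_mod _ p).symm
  have hsnd : ((y.appr m).choose b : ZMod p) = ((y.appr k).choose b : ZMod p) := by
    rw [lucas_mod k (y.appr m) b hb, appr_mod_pow y hk]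
  unfold padicChoose
  rw [lucas_pow m, hdiv, hmod, Nat.choose_one_right, appr_mod_pow y hmN', hfst, hsnd]
end Main

/-- For `y ∈ ℤ_p`, the sequence `n ↦ C(y,n) mod p` is ultimately periodic iff `y ∈ ℤ`. -/
theorem padicChoose_ultimately_periodic_iff {p : ℕ} [Fact p.Prime] (y : ℤ_[p]) :
    (∃ r : ℕ, 0 < r ∧ ∃ w : ℕ, ∀ n ≥ w, padicChoose y (n + r) = padicChoose y n) ↔
      ∃ m : ℤ, y = (m : ℤ_[p]) := by
  have hp1 : 1 < p := (Fact.out : p.Prime).one_lt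
  constructor
  · rintro ⟨r, hrpos, w, hper⟩
    by_contra hy
    have hA : ∀ M : ℕ, ∃ m, M ≤ m ∧ pdigit y m ≠ 0 := by
      intro M
      by_contra hc
      push_neg at hc
      exact hy (eventually_digit_zero y M hc)
    have hB : ∀ M : ℕ, ∃ m, M ≤ m ∧ pdigit y m ≠ p - 1 := by
      intro M
      by_contra hc
      push_neg at hc
      exact hy (eventually_digit_top y M hc)
    obtain ⟨k₀, hk₀r, hk₀d⟩ := hB r
    have hrk : r ≤ p ^ k₀ := le_trans hk₀r (Nat.lt_pow_self (n := k₀) hp1).le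
    have hak : y.appr (k₀ + 1) + r < p ^ (k₀ + 1) := by
      have h1 := (pdigit_spec y k₀).1
      have h2 := (pdigit_spec y k₀).2
      have h4 := y.appr_lt k₀
      have h5 : p ^ (k₀ + 1) = p ^ k₀ * p := pow_succ p k₀
      have h6 : pdigit y k₀ + 2 ≤ p := by omega
      have h7 : p ^ k₀ * pdigit y k₀ + p ^ k₀ * 2 ≤ p ^ k₀ * p := by
        have := Nat.mul_le_mul_left (p ^ k₀) h6
        rwa [Nat.mul_add] at this
      omega
    obtain ⟨m, hmge, hmd⟩ := hA (max (k₀ + 1) w)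
    have hkm : k₀ + 1 ≤ m := le_trans (le_max_left _ _) hmge
    have hwm : w ≤ m := le_trans (le_max_right _ _) hmge
    have hwpm : w ≤ p ^ m := le_trans hwm (Nat.lt_pow_self (n := m) hp1).le
    have e1 := padicChoose_eval y hkm (y.appr (k₀ + 1)) (by omega)
    have e2 := padicChoose_eval y hkm (y.appr (k₀ + 1) + r) hak
    have hper' := hper (p ^ m + y.appr (k₀ + 1)) (by omega)
    rw [show p ^ m + y.appr (k₀ + 1) + r = p ^ m + (y.appr (k₀ + 1) + r) by ring] at hper'
    rw [e1, e2] at hper'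
    rw [Nat.choose_self, Nat.choose_eq_zero_of_lt (by omega)] at hper'
    have hz : (pdigit y m : ZMod p) = 0 := by
      simpa using hper'.symm
    have hdvd := (ZMod.natCast_eq_zero_iff _ _).mp hz
    have hle := Nat.le_of_dvd (Nat.pos_of_ne_zero hmd) hdvd
    have hlt := (pdigit_spec y m).2
    omega
  · rintro ⟨z, rfl⟩
    cases z with
    | ofNat t =>
      refine ⟨1, Nat.one_pos, t + 1, ?_⟩
      have key : ∀ n', t + 1 ≤ n' → padicChoose ((Int.ofNat t : ℤ) : ℤ_[p]) n' = 0 := by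
        intro n' hn'
        have hspan : ((Int.ofNat t : ℤ) : ℤ_[p]) - ((t : ℕ) : ℤ_[p])
            ∈ Ideal.span {(p : ℤ_[p]) ^ (n' + 1)} := by
          have h0 : ((Int.ofNat t : ℤ) : ℤ_[p]) - ((t : ℕ) : ℤ_[p]) = 0 := by simp
          rw [h0]; exact Ideal.zero_mem _
        have hmod := appr_modEq_of_span _ t (n' + 1) hspan
        unfold padicChoose
        rw [choose_congr hmod (lt_pow_succ_self n'), Nat.choose_eq_zero_of_lt (by omega)]
        simp
      intro n hn
      rw [key (n + 1) (by omega), key n (by omega)]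
    | negSucc t =>
      have hy : ((Int.negSucc t : ℤ) : ℤ_[p]) = -(((t : ℕ) : ℤ_[p]) + 1) := by
        push_cast [Int.negSucc_eq]; ring
      have hpM : t < p ^ (t + 1) := lt_pow_succ_self t
      refine ⟨2 * p ^ (t + 1), by positivity, t + 1, ?_⟩
      have key : ∀ n', t + 1 ≤ n' → padicChoose ((Int.negSucc t : ℤ) : ℤ_[p]) n'
          = (-1) ^ n' * ((t + n').choose n' : ZMod p) := by
        intro n' hn'
        have h2 : 2 ^ (n' + 1) ≤ p ^ (n' + 1) := Nat.pow_le_pow_left (by omega) _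
        have h2' : n' < 2 ^ n' := Nat.lt_two_pow_self (n := n')
        have h1 : t + 1 + n' < p ^ (n' + 1) := by
          have hee : 2 ^ (n' + 1) = 2 * 2 ^ n' := by rw [pow_succ]; ring
          omega
        have hble : t + 1 ≤ p ^ (n' + 1) := by omega
        have hspan : ((Int.negSucc t : ℤ) : ℤ_[p]) - ((p ^ (n' + 1) - (t + 1) : ℕ) : ℤ_[p])
            ∈ Ideal.span {(p : ℤ_[p]) ^ (n' + 1)} := by
          rw [Ideal.mem_span_singleton]
          have hcast : ((p ^ (n' + 1) - (t + 1) : ℕ) : ℤ_[p])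
              = (p : ℤ_[p]) ^ (n' + 1) - (((t : ℕ) : ℤ_[p]) + 1) := by
            push_cast [hble]
            ring
          rw [hcast, hy]
          have hee : -(((t : ℕ) : ℤ_[p]) + 1) - ((p : ℤ_[p]) ^ (n' + 1) - (((t : ℕ) : ℤ_[p]) + 1))
              = -((p : ℤ_[p]) ^ (n' + 1)) := by ring
          rw [hee]
          exact dvd_neg.mpr dvd_rfl
        have hmod := appr_modEq_of_span _ _ (n' + 1) hspan
        unfold padicChoose
        rw [choose_congr hmod (lt_pow_succ_self n')]
        exact neg_choose (n' + 1) n' t h1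
      intro n hn
      rw [key (n + 2 * p ^ (t + 1)) (by omega), key n (by omega)]
      have hneg : ((-1 : ZMod p)) ^ (n + 2 * p ^ (t + 1)) = (-1) ^ n := by
        rw [pow_add, pow_mul]
        simp
      have hch : ((t + (n + 2 * p ^ (t + 1))).choose (n + 2 * p ^ (t + 1)) : ZMod p)
          = ((t + n).choose n : ZMod p) := by
        have e1 : (t + (n + 2 * p ^ (t + 1))).choose (n + 2 * p ^ (t + 1))
            = ((n + 2 * p ^ (t + 1)) + t).choose t := by
          rw [Nat.add_comm t _]; exact Nat.choose_symm_add
        have e2 : (t + n).choose n = (n + t).choose t := by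
          rw [Nat.add_comm t n]; exact Nat.choose_symm_add
        rw [e1, e2]
        refine choose_congr ?_ hpM
        have hme : n + t ≡ n + 2 * p ^ (t + 1) + t [MOD p ^ (t + 1)] :=
          (Nat.modEq_iff_dvd' (by omega)).mpr ⟨2, by omega⟩
        exact hme.symm
      rw [hneg, hch]
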